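/- Let n ∈ ℕ and q_+, q_− ∈ W^n_1[0,1]. Define a_k^±, b_k^± by the recurrences a_0^± = 0, b_0^± = 1, a_k^± = q_∓ b_{k−1}^± − (a_{k−1}^±)', b_k^±(x) = ∫_0^x q_±(t) a_k^±(t) dt (1 ≤ k ≤ n), and define σ_k^± on [0,1] by σ_k^± = a_k^± − Σ_{j=1}^{k−1} b_j^± σ_{k−j}^± for 1 ≤ k ≤ n. Then σ_1^± = q_∓, and for every 1 ≤ k ≤ n−1 and every x ∈ [0,1]: σ_{k+1}^±(x) = −(σ_k^±)'(x) − q_±(x) · Σ_{j=1}^{k−1} σ_j^±(x) σ_{k−j}^±(x). -/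

import Mathlib

open MeasureTheory Set Filter

noncomputable section

/-- The unit interval `[0,1]` as a subset of `ℝ`. -/
def I01 : Set ℝ := Set.Icc 0 1

/-- Lebesgue measure restricted to `[0,1]`. -/
def mu01 : MeasureTheory.Measure ℝ := MeasureTheory.volume.restrict I01

/-- `f ∈ W^n_1[0,1]`: the derivatives of `f` up to order `n-1` exist and are continuous on
`[0,1]`, and the `(n-1)`-st derivative is absolutely continuous, i.e. an indefinite integral
of an integrable function (its a.e.-derivative `f⁽ⁿ⁾ ∈ L¹[0,1]`). -/
def MemW1 (n : ℕ) (f : ℝ → ℂ) : Prop :=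
  ContDiffOn ℝ (n - 1 : ℕ) f I01 ∧
  ∃ g : ℝ → ℂ, MeasureTheory.IntegrableOn g I01 ∧
    ∀ x ∈ I01, iteratedDerivWithin (n - 1) f I01 x
      = iteratedDerivWithin (n - 1) f I01 0 + ∫ t in (0:ℝ)..x, g t

/-- `Jdet a j k` is the minor `J_{(j+1)(k+1)} = a_{1,j} a_{2,k} - a_{1,k} a_{2,j}` of the
boundary coefficient matrix (`0`-based indices). -/
def Jdet (a : Fin 2 → Fin 4 → ℂ) (j k : Fin 4) : ℂ := a 0 j * a 1 k - a 0 k * a 1 j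

/-- `y` satisfies the two-point boundary conditions `U_j(y) = 0`, `j = 1, 2`. -/
def SatisfiesBC (a : Fin 2 → Fin 4 → ℂ) (y : ℝ → ℂ × ℂ) : Prop :=
  ∀ j : Fin 2, a j 0 * (y 0).1 + a j 1 * (y 0).2 + a j 2 * (y 1).1 + a j 3 * (y 1).2 = 0

/-- `y` is absolutely continuous on `[0,1]` (an indefinite integral of an integrable `g`,
which is then its a.e. derivative) and satisfies `-i B⁻¹ y' + Q y = rhs` a.e. on `[0,1]`. -/
def SolvesDirac (b₁ b₂ : ℝ) (Q12 Q21 : ℝ → ℂ) (y rhs : ℝ → ℂ × ℂ) : Prop :=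
  ∃ g : ℝ → ℂ × ℂ, MeasureTheory.IntegrableOn g I01 ∧
    (∀ x ∈ I01, y x = y 0 + ∫ t in (0:ℝ)..x, g t) ∧
    (∀ᵐ x ∂mu01,
      (-Complex.I) * (b₁ : ℂ)⁻¹ * (g x).1 + Q12 x * (y x).2 = (rhs x).1 ∧
      (-Complex.I) * (b₂ : ℂ)⁻¹ * (g x).2 + Q21 x * (y x).1 = (rhs x).2)

/-- `y` is a root function of the boundary value problem: a member of a chain
`ch 0, …, ch m` of absolutely continuous functions satisfying the boundary conditions,
with `ch 0 ≠ 0`, `L (ch 0) = λ • ch 0` a.e. and `L (ch j) = λ • ch j + ch (j-1)` a.e. -/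
def IsRootFunction (b₁ b₂ : ℝ) (Q12 Q21 : ℝ → ℂ) (a : Fin 2 → Fin 4 → ℂ)
    (y : ℝ → ℂ × ℂ) : Prop :=
  ∃ (lam : ℂ) (m : ℕ) (ch : ℕ → ℝ → ℂ × ℂ),
    (∀ j ≤ m, SatisfiesBC a (ch j)) ∧
    (∃ x ∈ I01, ch 0 x ≠ 0) ∧
    SolvesDirac b₁ b₂ Q12 Q21 (ch 0) (fun x => lam • ch 0 x) ∧
    (∀ j, 1 ≤ j → j ≤ m →
      SolvesDirac b₁ b₂ Q12 Q21 (ch j) (fun x => lam • ch j x + ch (j - 1) x)) ∧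
    ∃ j ≤ m, y = ch j

/-- Completeness of the system of root functions in `L²([0,1]; ℂ²)`: the closed linear
span of (the `L²`-classes of) all root functions is the whole space. -/
def RootSystemComplete (b₁ b₂ : ℝ) (Q12 Q21 : ℝ → ℂ) (a : Fin 2 → Fin 4 → ℂ) : Prop :=
  (Submodule.span ℂ {g : MeasureTheory.Lp (ℂ × ℂ) 2 mu01 |
    ∃ y : ℝ → ℂ × ℂ, IsRootFunction b₁ b₂ Q12 Q21 a y ∧
      (g : ℝ → ℂ × ℂ) =ᵐ[mu01] y}).topologicalClosure = ⊤

lemma udo01 : UniqueDiffOn ℝ I01 := uniqueDiffOn_Icc one_pos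

lemma ftc_helper {h : ℝ → ℂ} (hh : ContinuousOn h I01) {x : ℝ} (hx : x ∈ I01) :
    HasDerivWithinAt (fun u => ∫ t in (0:ℝ)..u, h t) (h x) I01 x := by
  haveI : Fact (x ∈ Set.Icc (0:ℝ) 1) := ⟨hx⟩
  have hint : IntervalIntegrable h volume 0 x := by
    apply ContinuousOn.intervalIntegrable
    apply hh.mono
    rw [Set.uIcc_of_le hx.1]
    exact Set.Icc_subset_Icc le_rfl hx.2
  exact intervalIntegral.integral_hasDerivWithinAt_right (s := Set.Icc (0:ℝ) 1)
    (t := Set.Icc (0:ℝ) 1) hint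
    (hh.stronglyMeasurableAtFilter_nhdsWithin measurableSet_Icc x) (hh x hx)

lemma natcast_le_withtop {p q : ℕ} (h : p ≤ q) :
    ((p : ℕ) : WithTop ℕ∞) ≤ ((q : ℕ) : WithTop ℕ∞) := by exact_mod_cast h

lemma contDiffOn_derivWithin_of_succ {m : ℕ} {f : ℝ → ℂ}
    (h : ContDiffOn ℝ (m + 1 : ℕ) f I01) :
    ContDiffOn ℝ (m : ℕ) (derivWithin f I01) I01 := by
  rw [show ((m+1:ℕ) : WithTop ℕ∞) = (m : WithTop ℕ∞) + 1 by push_cast; ring] at h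
  exact ((contDiffOn_succ_iff_derivWithin udo01).1 h).2.2

theorem keyLemma (n : ℕ) (hn : 1 ≤ n) (q1 q2 : ℝ → ℂ)
    (hq1 : ContDiffOn ℝ (n-1:ℕ) q1 I01) (hq2 : ContDiffOn ℝ (n-1:ℕ) q2 I01)
    (a b σ : ℕ → ℝ → ℂ)
    (ha0 : ∀ x : ℝ, a 0 x = 0) (hb0 : ∀ x : ℝ, b 0 x = 1)
    (hak : ∀ k, 1 ≤ k → k ≤ n → ∀ x ∈ I01,
      a k x = q2 x * b (k - 1) x - derivWithin (a (k - 1)) I01 x)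
    (hbk : ∀ k, 1 ≤ k → k ≤ n → ∀ x ∈ I01,
      b k x = ∫ t in (0:ℝ)..x, q1 t * a k t)
    (hσ : ∀ k, 1 ≤ k → k ≤ n → ∀ x ∈ I01,
      σ k x = a k x - ∑ j ∈ Finset.Icc 1 (k - 1), b j x * σ (k - j) x) :
    (∀ x ∈ I01, σ 1 x = q2 x) ∧
    (∀ k, 1 ≤ k → k + 1 ≤ n → ∀ x ∈ I01,
      σ (k + 1) x = -(derivWithin (σ k) I01 x)
        - q1 x * ∑ j ∈ Finset.Icc 1 (k - 1), σ j x * σ (k - j) x) := by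
  have ha0' : ∀ x ∈ I01, derivWithin (a 0) I01 x = 0 := by
    intro x hx
    have e : a 0 = fun _ => (0:ℂ) := funext ha0
    rw [e]
    exact (hasDerivWithinAt_const x I01 (0:ℂ)).derivWithin (udo01 x hx)
  -- regularity
  have reg : ∀ k, k ≤ n →
      ContDiffOn ℝ (n - k : ℕ) (a k) I01 ∧
      (∀ x ∈ I01, HasDerivWithinAt (b k) (q1 x * a k x) I01 x) ∧
      ContDiffOn ℝ (n - k + 1 : ℕ) (b k) I01 ∧
      (1 ≤ k → ContDiffOn ℝ (n - k : ℕ) (σ k) I01) := by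
    intro k
    induction k using Nat.strong_induction_on with
    | _ k IH =>
      intro hkn
      match k, hkn with
      | 0, _ =>
        refine ⟨?_, ?_, ?_, by omega⟩
        · have e : a 0 = fun _ => (0:ℂ) := funext ha0
          rw [e]; exact contDiffOn_const
        · intro x hx
          have e : b 0 = fun _ => (1:ℂ) := funext hb0
          rw [e, ha0]
          simpa using (hasDerivWithinAt_const x I01 (1:ℂ))
        · have e : b 0 = fun _ => (1:ℂ) := funext hb0
          rw [e]; exact contDiffOn_const
      | (m+1), hkn =>
        set k := m + 1 with hkdef
        have hk1 : 1 ≤ k := by omega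
        have hmn : m ≤ n := by omega
        obtain ⟨hAm, hBdm, hBm, _⟩ := IH m (by omega) hmn
        -- a k
        have hAk : ContDiffOn ℝ (n - k : ℕ) (a k) I01 := by
          have hd : ContDiffOn ℝ (n - k : ℕ) (derivWithin (a m) I01) I01 := by
            have : ContDiffOn ℝ ((n - k) + 1 : ℕ) (a m) I01 := by
              have e : (n - k) + 1 = n - m := by omega
              rw [e]; exact hAm
            exact contDiffOn_derivWithin_of_succ this
          have hprod : ContDiffOn ℝ (n - k : ℕ) (fun y => q2 y * b m y) I01 :=
            (hq2.of_le (natcast_le_withtop (by omega))).mul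
              (hBm.of_le (natcast_le_withtop (by omega)))
          have : ContDiffOn ℝ (n - k : ℕ)
              (fun y => q2 y * b m y - derivWithin (a m) I01 y) I01 := hprod.sub hd
          exact this.congr (fun y hy => by
            simpa [show k - 1 = m by omega] using hak k hk1 hkn y hy)
        -- b k deriv
        have hcont : ContinuousOn (fun t => q1 t * a k t) I01 :=
          (hq1.continuousOn).mul (hAk.continuousOn)
        have hBdk : ∀ x ∈ I01, HasDerivWithinAt (b k) (q1 x * a k x) I01 x := by
          intro x hx
          exact (ftc_helper hcont hx).congr
            (fun y hy => hbk k hk1 hkn y hy) (hbk k hk1 hkn x hx)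
        -- b k smooth
        have hBk : ContDiffOn ℝ (n - k + 1 : ℕ) (b k) I01 := by
          rw [show ((n-k+1:ℕ) : WithTop ℕ∞) = ((n-k:ℕ) : WithTop ℕ∞) + 1 by push_cast; ring,
            contDiffOn_succ_iff_derivWithin udo01]
          refine ⟨fun y hy => (hBdk y hy).differentiableWithinAt, ?_, ?_⟩
          · intro h; simp at h
          · have hprod : ContDiffOn ℝ (n - k : ℕ) (fun y => q1 y * a k y) I01 :=
              (hq1.of_le (natcast_le_withtop (by omega))).mul hAk
            exact hprod.congr (fun y hy => (hBdk y hy).derivWithin (udo01 y hy))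
        -- σ k
        refine ⟨hAk, hBdk, hBk, fun _ => ?_⟩
        have hsum : ContDiffOn ℝ (n - k : ℕ)
            (fun y => a k y - ∑ j ∈ Finset.Icc 1 (k - 1), b j y * σ (k - j) y) I01 := by
          apply hAk.sub
          apply ContDiffOn.sum
          intro j hj
          rw [Finset.mem_Icc] at hj
          obtain ⟨_, _, hBj, _⟩ := IH j (by omega) (by omega)
          obtain ⟨_, _, _, hSj⟩ := IH (k - j) (by omega) (by omega)
          exact (hBj.of_le (natcast_le_withtop (by omega))).mul
            ((hSj (by omega)).of_le (natcast_le_withtop (by omega)))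
        exact hsum.congr (fun y hy => hσ k hk1 hkn y hy)
  -- σ 1 = q2
  have hσ1 : ∀ x ∈ I01, σ 1 x = q2 x := by
    intro x hx
    rw [hσ 1 le_rfl hn x hx]
    simp [hak 1 le_rfl hn x hx, hb0, ha0' x hx]
  refine ⟨hσ1, ?_⟩
  -- main induction
  intro k
  induction k using Nat.strong_induction_on with
  | _ k IH =>
    intro hk1 hkn x hx
    obtain ⟨l, rfl⟩ : ∃ l, k = l + 1 := ⟨k - 1, by omega⟩
    -- differentiability of σ m
    have hsd : ∀ m, 1 ≤ m → m ≤ l + 1 →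
        HasDerivWithinAt (σ m) (derivWithin (σ m) I01 x) I01 x := by
      intro m h1 h2
      have hs := (reg m (by omega)).2.2.2 h1
      have hdo : DifferentiableOn ℝ (σ m) I01 :=
        hs.differentiableOn (by exact_mod_cast (by omega : n - m ≠ 0))
      exact (hdo x hx).hasDerivWithinAt
    -- derivWithin of a (l+1)
    have hDak : derivWithin (a (l + 1)) I01 x = derivWithin (σ (l + 1)) I01 x
        + ∑ j ∈ Finset.Icc 1 l,
          (q1 x * a j x * σ (l + 1 - j) x + b j x * derivWithin (σ (l + 1 - j)) I01 x) := by
      have hF : HasDerivWithinAt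
          (fun y => σ (l + 1) y + ∑ j ∈ Finset.Icc 1 l, b j y * σ (l + 1 - j) y)
          (derivWithin (σ (l + 1)) I01 x
            + ∑ j ∈ Finset.Icc 1 l,
              (q1 x * a j x * σ (l + 1 - j) x + b j x * derivWithin (σ (l + 1 - j)) I01 x))
          I01 x := by
        apply (hsd (l + 1) hk1 le_rfl).add
        apply HasDerivWithinAt.fun_sum
        intro j hj
        rw [Finset.mem_Icc] at hj
        exact ((reg j (by omega)).2.1 x hx).mul (hsd (l + 1 - j) (by omega) (by omega))
      have hl : l + 1 - 1 = l := by omega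
      have hco : HasDerivWithinAt (a (l + 1)) _ I01 x := hF.congr
        (fun y hy => by rw [hσ (l + 1) hk1 (by omega) y hy, hl]; ring)
        (by rw [hσ (l + 1) hk1 (by omega) x hx, hl]; ring)
      exact hco.derivWithin (udo01 x hx)
    -- the inductive formula for derivWithin (σ (l+1-j))
    have hE2 : ∀ j ∈ Finset.Icc 1 l, derivWithin (σ (l + 1 - j)) I01 x
        = -(σ (l + 1 + 1 - j) x)
          - q1 x * ∑ i ∈ Finset.Icc 1 (l + 1 - j - 1), σ i x * σ (l + 1 - j - i) x := by
      intro j hj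
      rw [Finset.mem_Icc] at hj
      have h1 := IH (l + 1 - j) (by omega) (by omega) (by omega) x hx
      have e1 : l + 1 - j + 1 = l + 1 + 1 - j := by omega
      rw [e1] at h1
      linear_combination h1
    -- termwise identity
    have hterm : ∀ j ∈ Finset.Icc 1 l,
        q1 x * a j x * σ (l + 1 - j) x + b j x * derivWithin (σ (l + 1 - j)) I01 x
        = (q1 x * (σ j x * σ (l + 1 - j) x) - b j x * σ (l + 1 + 1 - j) x
            + q1 x * ((∑ i ∈ Finset.Icc 1 (j - 1), b i x * σ (j - i) x) * σ (l + 1 - j) x))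
          - q1 x * (b j x * ∑ i ∈ Finset.Icc 1 (l + 1 - j - 1), σ i x * σ (l + 1 - j - i) x) := by
      intro j hj
      have hj' := Finset.mem_Icc.1 hj
      have haj : a j x = σ j x + ∑ i ∈ Finset.Icc 1 (j - 1), b i x * σ (j - i) x := by
        rw [hσ j (by omega) (by omega) x hx]; ring
      rw [hE2 j hj, haj]
      ring
    -- the double-sum bijection
    have hbij : ∑ j ∈ Finset.Icc 1 l,
          (∑ i ∈ Finset.Icc 1 (j - 1), b i x * σ (j - i) x) * σ (l + 1 - j) x
        = ∑ j ∈ Finset.Icc 1 l,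
          b j x * ∑ i ∈ Finset.Icc 1 (l + 1 - j - 1), σ i x * σ (l + 1 - j - i) x := by
      have lhs : ∀ j ∈ Finset.Icc 1 l,
          (∑ i ∈ Finset.Icc 1 (j - 1), b i x * σ (j - i) x) * σ (l + 1 - j) x
          = ∑ i ∈ Finset.Icc 1 (j - 1), b i x * σ (j - i) x * σ (l + 1 - j) x := by
        intro j _; rw [Finset.sum_mul]
      have rhs : ∀ j ∈ Finset.Icc 1 l,
          b j x * ∑ i ∈ Finset.Icc 1 (l + 1 - j - 1), σ i x * σ (l + 1 - j - i) x
          = ∑ i ∈ Finset.Icc 1 (l + 1 - j - 1), b j x * (σ i x * σ (l + 1 - j - i) x) := by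
        intro j _; rw [Finset.mul_sum]
      rw [Finset.sum_congr rfl lhs, Finset.sum_congr rfl rhs,
        Finset.sum_sigma' (Finset.Icc 1 l) (fun j => Finset.Icc 1 (j - 1))
          (fun j i => b i x * σ (j - i) x * σ (l + 1 - j) x),
        Finset.sum_sigma' (Finset.Icc 1 l) (fun j => Finset.Icc 1 (l + 1 - j - 1))
          (fun j i => b j x * (σ i x * σ (l + 1 - j - i) x))]
      refine Finset.sum_nbij' (fun p => ⟨p.2, l + 1 - p.1⟩) (fun p => ⟨l + 1 - p.2, p.1⟩)
        ?_ ?_ ?_ ?_ ?_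
      · rintro ⟨p1, p2⟩ hp
        simp only [Finset.mem_sigma, Finset.mem_Icc] at hp ⊢
        omega
      · rintro ⟨p1, p2⟩ hp
        simp only [Finset.mem_sigma, Finset.mem_Icc] at hp ⊢
        omega
      · rintro ⟨p1, p2⟩ hp
        simp only [Finset.mem_sigma, Finset.mem_Icc] at hp
        simp only [Sigma.mk.inj_iff, heq_eq_eq]
        exact ⟨by omega, trivial⟩
      · rintro ⟨p1, p2⟩ hp
        simp only [Finset.mem_sigma, Finset.mem_Icc] at hp
        simp only [Sigma.mk.inj_iff, heq_eq_eq]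
        exact ⟨trivial, by omega⟩
      · rintro ⟨p1, p2⟩ hp
        simp only [Finset.mem_sigma, Finset.mem_Icc] at hp
        have e1 : l + 1 - p2 - (l + 1 - p1) = p1 - p2 := by omega
        simp only [e1]
        ring
    -- the big sum
    have hSumBig : ∑ j ∈ Finset.Icc 1 l,
          (q1 x * a j x * σ (l + 1 - j) x + b j x * derivWithin (σ (l + 1 - j)) I01 x)
        = q1 x * (∑ j ∈ Finset.Icc 1 l, σ j x * σ (l + 1 - j) x)
          - ∑ j ∈ Finset.Icc 1 l, b j x * σ (l + 1 + 1 - j) x := by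
      rw [Finset.sum_congr rfl hterm]
      simp only [Finset.sum_sub_distrib, Finset.sum_add_distrib]
      rw [← Finset.mul_sum, ← Finset.mul_sum, ← Finset.mul_sum, hbij]
      ring
    -- splitting the top sum
    have hE1 : ∑ j ∈ Finset.Icc 1 (l + 1), b j x * σ (l + 1 + 1 - j) x
        = (∑ j ∈ Finset.Icc 1 l, b j x * σ (l + 1 + 1 - j) x) + b (l + 1) x * q2 x := by
      rw [Finset.sum_Icc_succ_top (by omega : 1 ≤ l + 1)]
      congr 1
      rw [show l + 1 + 1 - (l + 1) = 1 by omega, hσ1 x hx]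
    -- assemble
    rw [hσ (l + 1 + 1) (by omega) (by omega) x hx]
    simp only [Nat.add_sub_cancel]
    rw [hak (l + 1 + 1) (by omega) (by omega) x hx]
    simp only [Nat.add_sub_cancel]
    rw [hDak, hSumBig, hE1]
    ring

/-- Proposition: the explicit recurrence for `σ_k^±`. -/
theorem statement_9
    (b₁ b₂ : ℝ) (hb₁ : b₁ < 0) (hb₂ : 0 < b₂)
    (n : ℕ) (hn : 1 ≤ n)
    (qp qm : ℝ → ℂ) (hqp : MemW1 n qp) (hqm : MemW1 n qm)
    (ap am bp bm : ℕ → ℝ → ℂ)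
    (hap0 : ∀ x : ℝ, ap 0 x = 0) (ham0 : ∀ x : ℝ, am 0 x = 0)
    (hbp0 : ∀ x : ℝ, bp 0 x = 1) (hbm0 : ∀ x : ℝ, bm 0 x = 1)
    (hapk : ∀ k, 1 ≤ k → k ≤ n → ∀ x ∈ I01,
      ap k x = qm x * bp (k - 1) x - derivWithin (ap (k - 1)) I01 x)
    (hamk : ∀ k, 1 ≤ k → k ≤ n → ∀ x ∈ I01,
      am k x = qp x * bm (k - 1) x - derivWithin (am (k - 1)) I01 x)
    (hbpk : ∀ k, 1 ≤ k → k ≤ n → ∀ x ∈ I01,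
      bp k x = ∫ t in (0:ℝ)..x, qp t * ap k t)
    (hbmk : ∀ k, 1 ≤ k → k ≤ n → ∀ x ∈ I01,
      bm k x = ∫ t in (0:ℝ)..x, qm t * am k t)
    (σp σm : ℕ → ℝ → ℂ)
    (hσp : ∀ k, 1 ≤ k → k ≤ n → ∀ x ∈ I01,
      σp k x = ap k x - ∑ j ∈ Finset.Icc 1 (k - 1), bp j x * σp (k - j) x)
    (hσm : ∀ k, 1 ≤ k → k ≤ n → ∀ x ∈ I01,
      σm k x = am k x - ∑ j ∈ Finset.Icc 1 (k - 1), bm j x * σm (k - j) x) :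
    (∀ x ∈ I01, σp 1 x = qm x ∧ σm 1 x = qp x) ∧
    (∀ k, 1 ≤ k → k + 1 ≤ n → ∀ x ∈ I01,
      σp (k + 1) x = -(derivWithin (σp k) I01 x)
        - qp x * ∑ j ∈ Finset.Icc 1 (k - 1), σp j x * σp (k - j) x) ∧
    (∀ k, 1 ≤ k → k + 1 ≤ n → ∀ x ∈ I01,
      σm (k + 1) x = -(derivWithin (σm k) I01 x)
        - qm x * ∑ j ∈ Finset.Icc 1 (k - 1), σm j x * σm (k - j) x) := by
  have kp := keyLemma n hn qp qm hqp.1 hqm.1 ap bp σp hap0 hbp0 hapk hbpk hσp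
  have km := keyLemma n hn qm qp hqm.1 hqp.1 am bm σm ham0 hbm0 hamk hbmk hσm
  exact ⟨fun x hx => ⟨kp.1 x hx, km.1 x hx⟩, kp.2, km.2⟩
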